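/- Let H and H' be Hopf algebras over a field k with bijective antipodes, τ a Hopf algebra automorphism of H of finite order r, and φ : H → H' a surjective Hopf algebra homomorphism with τ(ker φ) = ker φ. Let τ' be the induced Hopf algebra automorphism of H' defined by τ'(φ(h)) = φ(τ(h)), and let r' be the order of τ'. Then exp_{τ'}(H') divides exp_τ(H)·(r/r'). -/

import Mathlib

open scoped TensorProduct

noncomputable section

namespace TwistedExponent

variable (k H : Type*) [CommRing k] [Ring H] [HopfAlgebra k H]

/-- The convolution product of two linear endomorphisms of a bialgebra:
`f * g = μ ∘ (f ⊗ g) ∘ Δ`. -/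
def conv (f g : H →ₗ[k] H) : H →ₗ[k] H :=
  LinearMap.mul' k H ∘ₗ TensorProduct.map f g ∘ₗ Coalgebra.comul

/-- The convolution unit `η ∘ ε`, i.e. `h ↦ ε(h)·1`. -/
def convOne : H →ₗ[k] H := Algebra.linearMap k H ∘ₗ Coalgebra.counit

/-- `gamma T m` is the map `Γ_m = μ^m ∘ (Id ⊗ T ⊗ T² ⊗ ⋯ ⊗ T^{m-1}) ∘ Δ^{m-1}`, expressed as
the convolution product `Id * T * T² * ⋯ * T^{m-1}` (with `gamma T 0` the convolution unit). -/
def gamma (T : H →ₗ[k] H) : ℕ → (H →ₗ[k] H)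
  | 0 => convOne k H
  | (m + 1) => conv k H (gamma T m) (T ^ m)

/-- The inverse of the antipode, given that the antipode is bijective. -/
def antipodeInv (hS : Function.Bijective (HopfAlgebra.antipode (R := k) (A := H))) :
    H →ₗ[k] H :=
  (LinearEquiv.ofBijective (HopfAlgebra.antipode (R := k) (A := H)) hS).symm

/-- The map `S⁻² ∘ τ`. -/
def twist (hS : Function.Bijective (HopfAlgebra.antipode (R := k) (A := H)))
    (τ : H →ₗ[k] H) : H →ₗ[k] H :=
  antipodeInv k H hS ∘ₗ antipodeInv k H hS ∘ₗ τ

/-- `f : H → H` has exact (finite) order `r`. -/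
def HasOrder (τ : H → H) (r : ℕ) : Prop :=
  0 < r ∧ τ^[r] = id ∧ ∀ s : ℕ, 0 < s → s < r → τ^[s] ≠ id

end TwistedExponent

open TwistedExponent
namespace Stmt9Aux

open Coalgebra

section Conv

variable {k : Type*} [CommRing k] {C C' A B : Type*}
  [AddCommGroup C] [Module k C] [Coalgebra k C]
  [AddCommGroup C'] [Module k C'] [Coalgebra k C']
  [Ring A] [Algebra k A] [Ring B] [Algebra k B]

/-- Convolution product on linear maps from a coalgebra to an algebra. -/
noncomputable def cv (f g : C →ₗ[k] A) : C →ₗ[k] A :=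
  LinearMap.mul' k A ∘ₗ TensorProduct.map f g ∘ₗ Coalgebra.comul

/-- Convolution unit. -/
noncomputable def cu : C →ₗ[k] A := Algebra.linearMap k A ∘ₗ Coalgebra.counit

lemma cv_apply (f g : C →ₗ[k] A) (a : C) {ι : Type*} (repr : Coalgebra.Repr k a ι) :
    cv f g a = ∑ i ∈ repr.index, f (repr.left i) * g (repr.right i) := by
  simp only [cv, LinearMap.comp_apply, ← repr.eq, map_sum, TensorProduct.map_tmul,
    LinearMap.mul'_apply]

lemma cu_apply (a : C) : (cu : C →ₗ[k] A) a = algebraMap k A (Coalgebra.counit a) := rfl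

lemma sum_counit_smul {a : C} {ι : Type*} (repr : Coalgebra.Repr k a ι) :
    ∑ i ∈ repr.index, Coalgebra.counit (R := k) (repr.left i) • repr.right i = a := by
  have h := congrArg (TensorProduct.lid k C) (Coalgebra.sum_counit_tmul_eq repr)
  rw [map_sum] at h
  simp only [TensorProduct.lid_tmul, one_smul] at h
  exact h

lemma sum_smul_counit {a : C} {ι : Type*} (repr : Coalgebra.Repr k a ι) :
    ∑ i ∈ repr.index, Coalgebra.counit (R := k) (repr.right i) • repr.left i = a := by
  have h := congrArg (TensorProduct.rid k C) (Coalgebra.sum_tmul_counit_eq repr)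
  rw [map_sum] at h
  simp only [TensorProduct.rid_tmul, one_smul] at h
  exact h

lemma cv_one (f : C →ₗ[k] A) : cv cu f = f := by
  ext a
  rw [cv_apply _ _ a (Coalgebra.Repr.arbitrary k a)]
  simp only [cu_apply, ← Algebra.smul_def, ← map_smul, ← map_sum]
  rw [sum_counit_smul]

lemma cv_one' (f : C →ₗ[k] A) : cv f cu = f := by
  ext a
  rw [cv_apply _ _ a (Coalgebra.Repr.arbitrary k a)]
  simp only [cu_apply, ← Algebra.commutes, ← Algebra.smul_def, ← map_smul, ← map_sum]
  rw [sum_smul_counit]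

lemma cv_comp (f g : C →ₗ[k] A) (p : C' →ₗ[k] C)
    (hp : TensorProduct.map p p ∘ₗ Coalgebra.comul = Coalgebra.comul ∘ₗ p) :
    cv f g ∘ₗ p = cv (f ∘ₗ p) (g ∘ₗ p) := by
  simp only [cv, TensorProduct.map_comp, LinearMap.comp_assoc, hp]

lemma cu_comp (p : C' →ₗ[k] C) (hp : Coalgebra.counit ∘ₗ p = Coalgebra.counit) :
    (cu : C →ₗ[k] A) ∘ₗ p = cu := by
  simp only [cu, LinearMap.comp_assoc, hp]

lemma comp_cv (q : A →ₗ[k] B) (hqm : ∀ x y : A, q (x * y) = q x * q y) (f g : C →ₗ[k] A) :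
    q ∘ₗ cv f g = cv (q ∘ₗ f) (q ∘ₗ g) := by
  ext a
  rw [LinearMap.comp_apply, cv_apply f g a (Coalgebra.Repr.arbitrary k a),
    cv_apply _ _ a (Coalgebra.Repr.arbitrary k a), map_sum]
  simp only [hqm, LinearMap.comp_apply]

lemma comp_cu (q : A →ₗ[k] B) (hq1 : q 1 = 1) : q ∘ₗ (cu : C →ₗ[k] A) = cu := by
  ext a
  simp only [LinearMap.comp_apply, cu_apply, Algebra.algebraMap_eq_smul_one, map_smul, hq1]

lemma cv_assoc (f g h : C →ₗ[k] A) : cv (cv f g) h = cv f (cv g h) := by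
  ext a
  set R0 := Coalgebra.Repr.arbitrary k a
  set RL : (i : R0.ι) → Coalgebra.Repr k (R0.left i) (C × C) :=
    fun i => Coalgebra.Repr.arbitrary k (R0.left i) with hRL
  set RR : (i : R0.ι) → Coalgebra.Repr k (R0.right i) (C × C) :=
    fun i => Coalgebra.Repr.arbitrary k (R0.right i) with hRR
  have key := Coalgebra.sum_tmul_tmul_eq R0 RL RR
  have key2 := congrArg (LinearMap.mul' k A ∘ₗ
    TensorProduct.map f (LinearMap.mul' k A ∘ₗ TensorProduct.map g h)) key
  simp only [map_sum, LinearMap.comp_apply, TensorProduct.map_tmul,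
    LinearMap.mul'_apply] at key2
  rw [cv_apply (cv f g) h a R0, cv_apply f (cv g h) a R0]
  calc ∑ i ∈ R0.index, cv f g (R0.left i) * h (R0.right i)
      = ∑ i ∈ R0.index, ∑ j ∈ (RL i).index,
          f ((RL i).left j) * (g ((RL i).right j) * h (R0.right i)) := by
        refine Finset.sum_congr rfl fun i _ => ?_
        rw [cv_apply f g _ (RL i), Finset.sum_mul]
        simp only [mul_assoc]
    _ = ∑ i ∈ R0.index, ∑ j ∈ (RR i).index,
          f (R0.left i) * (g ((RR i).left j) * h ((RR i).right j)) := key2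
    _ = ∑ i ∈ R0.index, f (R0.left i) * cv g h (R0.right i) := by
        refine Finset.sum_congr rfl fun i _ => ?_
        rw [cv_apply g h _ (RR i), Finset.mul_sum]

lemma cv_inv_unique {f g h : C →ₗ[k] A} (h1 : cv f g = cu) (h2 : cv g h = cu) : f = h := by
  calc f = cv f cu := (cv_one' f).symm
    _ = cv f (cv g h) := by rw [h2]
    _ = cv (cv f g) h := (cv_assoc f g h).symm
    _ = cv cu h := by rw [h1]
    _ = h := cv_one h

end Conv

section Hopf

variable {k H : Type*} [CommRing k] [Ring H] [HopfAlgebra k H]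

local notation "S" => HopfAlgebra.antipode (R := k) (A := H)

lemma cv_antipode_id : cv (S) (LinearMap.id) = (cu : H →ₗ[k] H) := by
  ext a
  rw [cv_apply _ _ a (Coalgebra.Repr.arbitrary k a), cu_apply]
  simpa using HopfAlgebra.sum_antipode_mul_eq_algebraMap_counit (Coalgebra.Repr.arbitrary k a)

lemma cv_id_antipode : cv (LinearMap.id) (S) = (cu : H →ₗ[k] H) := by
  ext a
  rw [cv_apply _ _ a (Coalgebra.Repr.arbitrary k a), cu_apply]
  simpa using HopfAlgebra.sum_mul_antipode_eq_algebraMap_counit (Coalgebra.Repr.arbitrary k a)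

/-- Auxiliary Sweedler-style computation. -/
lemma aux_D (b c : H) {ι : Type*} (Rb : Coalgebra.Repr k b ι) :
    ∑ m ∈ Rb.index, ((S) (Rb.left m) ⊗ₜ[k] c) * Coalgebra.comul (Rb.right m)
      = (1 : H) ⊗ₜ[k] (c * b) := by
  set RbL : (m : Rb.ι) → Coalgebra.Repr k (Rb.left m) (H × H) :=
    fun m => Coalgebra.Repr.arbitrary k (Rb.left m)
  set RbR : (m : Rb.ι) → Coalgebra.Repr k (Rb.right m) (H × H) :=
    fun m => Coalgebra.Repr.arbitrary k (Rb.right m)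
  have key := Coalgebra.sum_tmul_tmul_eq Rb RbL RbR
  set Φ : H ⊗[k] (H ⊗[k] H) →ₗ[k] H ⊗[k] H :=
    TensorProduct.map (LinearMap.mul' k H ∘ₗ TensorProduct.map (S) LinearMap.id)
      (LinearMap.mulLeft k c) ∘ₗ (TensorProduct.assoc k H H H).symm.toLinearMap with hΦ
  have key2 := congrArg Φ key
  simp only [map_sum, hΦ, LinearMap.comp_apply, LinearEquiv.coe_coe,
    TensorProduct.assoc_symm_tmul, TensorProduct.map_tmul, LinearMap.mul'_apply,
    LinearMap.mulLeft_apply, LinearMap.id_apply] at key2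
  calc ∑ m ∈ Rb.index, ((S) (Rb.left m) ⊗ₜ[k] c) * Coalgebra.comul (Rb.right m)
      = ∑ m ∈ Rb.index, ∑ p ∈ (RbR m).index,
          ((S) (Rb.left m) * (RbR m).left p) ⊗ₜ[k] (c * (RbR m).right p) := by
        refine Finset.sum_congr rfl fun m _ => ?_
        rw [← (RbR m).eq, Finset.mul_sum]
        simp only [Algebra.TensorProduct.tmul_mul_tmul]
    _ = ∑ m ∈ Rb.index, ∑ j ∈ (RbL m).index,
          ((S) ((RbL m).left j) * (RbL m).right j) ⊗ₜ[k] (c * Rb.right m) := key2.symm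
    _ = ∑ m ∈ Rb.index, (1 : H) ⊗ₜ[k]
          ((Coalgebra.counit (R := k) (Rb.left m)) • (c * Rb.right m)) := by
        refine Finset.sum_congr rfl fun m _ => ?_
        rw [← TensorProduct.sum_tmul, HopfAlgebra.sum_antipode_mul_eq_algebraMap_counit (RbL m),
          Algebra.algebraMap_eq_smul_one, TensorProduct.smul_tmul]
    _ = (1 : H) ⊗ₜ[k] (c * b) := by
        rw [← TensorProduct.tmul_sum]
        congr 1
        simp only [← mul_smul_comm]
        rw [← Finset.mul_sum, sum_counit_smul Rb]

lemma cv_anticomul_comul :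
    cv ((TensorProduct.comm k H H).toLinearMap ∘ₗ TensorProduct.map (S) (S) ∘ₗ Coalgebra.comul)
      (Coalgebra.comul) = (cu : H →ₗ[k] H ⊗[k] H) := by
  ext a
  set R0 := Coalgebra.Repr.arbitrary k a with hR0
  set RL : (i : R0.ι) → Coalgebra.Repr k (R0.left i) (H × H) :=
    fun i => Coalgebra.Repr.arbitrary k (R0.left i)
  set RR : (i : R0.ι) → Coalgebra.Repr k (R0.right i) (H × H) :=
    fun i => Coalgebra.Repr.arbitrary k (R0.right i)
  have key := Coalgebra.sum_tmul_tmul_eq R0 RL RR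
  set Ψ : H ⊗[k] (H ⊗[k] H) →ₗ[k] H ⊗[k] H :=
    LinearMap.mul' k (H ⊗[k] H) ∘ₗ
      TensorProduct.map ((TensorProduct.comm k H H).toLinearMap ∘ₗ TensorProduct.map (S) (S))
        Coalgebra.comul ∘ₗ (TensorProduct.assoc k H H H).symm.toLinearMap with hΨ
  have key2 := congrArg Ψ key
  simp only [map_sum, hΨ, LinearMap.comp_apply, LinearEquiv.coe_coe,
    TensorProduct.assoc_symm_tmul, TensorProduct.map_tmul, TensorProduct.comm_tmul,
    LinearMap.mul'_apply] at key2
  rw [cv_apply _ _ a R0, cu_apply]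
  calc ∑ i ∈ R0.index,
        ((TensorProduct.comm k H H).toLinearMap ∘ₗ TensorProduct.map (S) (S) ∘ₗ
          Coalgebra.comul) (R0.left i) * Coalgebra.comul (R0.right i)
      = ∑ i ∈ R0.index, ∑ j ∈ (RL i).index,
          ((S) ((RL i).right j) ⊗ₜ[k] (S) ((RL i).left j)) * Coalgebra.comul (R0.right i) := by
        refine Finset.sum_congr rfl fun i _ => ?_
        rw [LinearMap.comp_apply, LinearMap.comp_apply, ← (RL i).eq, map_sum, map_sum,
          Finset.sum_mul]
        simp only [TensorProduct.map_tmul, TensorProduct.comm_tmul, LinearEquiv.coe_coe]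
    _ = ∑ i ∈ R0.index, ∑ m ∈ (RR i).index,
          ((S) ((RR i).left m) ⊗ₜ[k] (S) (R0.left i)) * Coalgebra.comul ((RR i).right m) :=
        key2
    _ = ∑ i ∈ R0.index, (1 : H) ⊗ₜ[k] ((S) (R0.left i) * R0.right i) := by
        refine Finset.sum_congr rfl fun i _ => ?_
        exact aux_D (R0.right i) ((S) (R0.left i)) (RR i)
    _ = algebraMap k (H ⊗[k] H) (Coalgebra.counit a) := by
        rw [← TensorProduct.tmul_sum, HopfAlgebra.sum_antipode_mul_eq_algebraMap_counit R0,
          Algebra.TensorProduct.algebraMap_apply']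

lemma cv_comul_comul_antipode :
    cv (Coalgebra.comul) (Coalgebra.comul ∘ₗ (S)) = (cu : H →ₗ[k] H ⊗[k] H) := by
  have h := comp_cv (Coalgebra.comul : H →ₗ[k] H ⊗[k] H)
    (fun x y => Bialgebra.comul_mul x y) LinearMap.id (S)
  rw [cv_id_antipode, comp_cu _ Bialgebra.comul_one, LinearMap.comp_id] at h
  exact h.symm

/-- The antipode is an anti-coalgebra morphism. -/
lemma comul_antipode :
    Coalgebra.comul ∘ₗ (S) =
      (TensorProduct.comm k H H).toLinearMap ∘ₗ TensorProduct.map (S) (S) ∘ₗ Coalgebra.comul :=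
  (cv_inv_unique cv_anticomul_comul cv_comul_comul_antipode).symm

lemma counit_antipode :
    (Coalgebra.counit : H →ₗ[k] k) ∘ₗ (S) = Coalgebra.counit := by
  have hcu : (cu : H →ₗ[k] k) = Coalgebra.counit := by
    ext a; simp [cu_apply]
  have h := comp_cv (Coalgebra.counit : H →ₗ[k] k)
    (fun x y => Bialgebra.counit_mul x y) LinearMap.id (S)
  rw [cv_id_antipode, comp_cu _ Bialgebra.counit_one, LinearMap.comp_id] at h
  calc (Coalgebra.counit : H →ₗ[k] k) ∘ₗ (S)
      = cv cu ((Coalgebra.counit : H →ₗ[k] k) ∘ₗ (S)) :=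
        (cv_one _).symm
    _ = cv Coalgebra.counit ((Coalgebra.counit : H →ₗ[k] k) ∘ₗ (S)) := by rw [hcu]
    _ = cu := h.symm
    _ = Coalgebra.counit := hcu

/-- `S²` is a coalgebra morphism. -/
lemma comul_antipode_sq :
    TensorProduct.map ((S) ∘ₗ (S)) ((S) ∘ₗ (S)) ∘ₗ Coalgebra.comul =
      Coalgebra.comul ∘ₗ ((S) ∘ₗ (S)) := by
  have hbig : (TensorProduct.comm k H H).toLinearMap ∘ₗ TensorProduct.map (S) (S) ∘ₗ
      (TensorProduct.comm k H H).toLinearMap ∘ₗ TensorProduct.map (S) (S)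
      = TensorProduct.map ((S) ∘ₗ (S)) ((S) ∘ₗ (S)) := by
    apply TensorProduct.ext'
    intro x y
    simp
  symm
  calc Coalgebra.comul ∘ₗ ((S) ∘ₗ (S))
      = (Coalgebra.comul ∘ₗ (S)) ∘ₗ (S) := by rw [LinearMap.comp_assoc]
    _ = ((TensorProduct.comm k H H).toLinearMap ∘ₗ TensorProduct.map (S) (S) ∘ₗ
          Coalgebra.comul) ∘ₗ (S) := by rw [comul_antipode]
    _ = (TensorProduct.comm k H H).toLinearMap ∘ₗ TensorProduct.map (S) (S) ∘ₗ
          (Coalgebra.comul ∘ₗ (S)) := by simp only [LinearMap.comp_assoc]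
    _ = ((TensorProduct.comm k H H).toLinearMap ∘ₗ TensorProduct.map (S) (S) ∘ₗ
          (TensorProduct.comm k H H).toLinearMap ∘ₗ TensorProduct.map (S) (S)) ∘ₗ
          Coalgebra.comul := by
        rw [comul_antipode]; simp only [LinearMap.comp_assoc]
    _ = TensorProduct.map ((S) ∘ₗ (S)) ((S) ∘ₗ (S)) ∘ₗ Coalgebra.comul := by rw [hbig]

end Hopf

end Stmt9Aux


namespace Stmt9Aux

open Coalgebra TwistedExponent

section Inv

variable {k H : Type*} [CommRing k] [Ring H] [HopfAlgebra k H]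
  (hS : Function.Bijective (HopfAlgebra.antipode (R := k) (A := H)))

local notation "S" => HopfAlgebra.antipode (R := k) (A := H)
local notation "aInv" => TwistedExponent.antipodeInv k H hS

lemma antipode_comp_antipodeInv : (S) ∘ₗ aInv = LinearMap.id := by
  ext x
  exact (LinearEquiv.ofBijective (S) hS).apply_symm_apply x

lemma antipodeInv_comp_antipode : aInv ∘ₗ (S) = LinearMap.id := by
  ext x
  exact (LinearEquiv.ofBijective (S) hS).symm_apply_apply x

lemma counit_antipodeInv :
    (Coalgebra.counit : H →ₗ[k] k) ∘ₗ aInv = Coalgebra.counit := by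
  calc (Coalgebra.counit : H →ₗ[k] k) ∘ₗ aInv
      = ((Coalgebra.counit : H →ₗ[k] k) ∘ₗ (S)) ∘ₗ aInv := by rw [counit_antipode]
    _ = (Coalgebra.counit : H →ₗ[k] k) ∘ₗ ((S) ∘ₗ aInv) := by rw [LinearMap.comp_assoc]
    _ = Coalgebra.counit := by rw [antipode_comp_antipodeInv, LinearMap.comp_id]

lemma comul_antipodeInv_sq :
    TensorProduct.map (aInv ∘ₗ aInv) (aInv ∘ₗ aInv) ∘ₗ Coalgebra.comul =
      Coalgebra.comul ∘ₗ (aInv ∘ₗ aInv) := by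
  set u : H →ₗ[k] H := (S) ∘ₗ (S) with hu
  set v : H →ₗ[k] H := aInv ∘ₗ aInv with hv
  have huv : u ∘ₗ v = LinearMap.id := by
    rw [hu, hv]
    calc ((S) ∘ₗ (S)) ∘ₗ aInv ∘ₗ aInv = (S) ∘ₗ ((S) ∘ₗ aInv) ∘ₗ aInv := by
          simp only [LinearMap.comp_assoc]
      _ = (S) ∘ₗ (LinearMap.id ∘ₗ aInv) := by rw [antipode_comp_antipodeInv hS]
      _ = LinearMap.id := by rw [LinearMap.id_comp, antipode_comp_antipodeInv hS]
  have hvu : v ∘ₗ u = LinearMap.id := by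
    rw [hu, hv]
    calc (aInv ∘ₗ aInv) ∘ₗ (S) ∘ₗ (S) = aInv ∘ₗ (aInv ∘ₗ (S)) ∘ₗ (S) := by
          simp only [LinearMap.comp_assoc]
      _ = aInv ∘ₗ (LinearMap.id ∘ₗ (S)) := by rw [antipodeInv_comp_antipode hS]
      _ = LinearMap.id := by rw [LinearMap.id_comp, antipodeInv_comp_antipode hS]
  have hmapvu : TensorProduct.map v v ∘ₗ TensorProduct.map u u
      = (LinearMap.id : H ⊗[k] H →ₗ[k] H ⊗[k] H) := by
    rw [← TensorProduct.map_comp, hvu]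
    apply TensorProduct.ext'
    intro x y
    simp
  calc TensorProduct.map v v ∘ₗ Coalgebra.comul
      = TensorProduct.map v v ∘ₗ Coalgebra.comul ∘ₗ (u ∘ₗ v) := by
        rw [huv, LinearMap.comp_id]
    _ = TensorProduct.map v v ∘ₗ (Coalgebra.comul ∘ₗ u) ∘ₗ v := by
        simp only [LinearMap.comp_assoc]
    _ = TensorProduct.map v v ∘ₗ (TensorProduct.map u u ∘ₗ Coalgebra.comul) ∘ₗ v := by
        rw [← comul_antipode_sq]
    _ = (TensorProduct.map v v ∘ₗ TensorProduct.map u u) ∘ₗ Coalgebra.comul ∘ₗ v := by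
        simp only [LinearMap.comp_assoc]
    _ = Coalgebra.comul ∘ₗ v := by rw [hmapvu, LinearMap.id_comp]


lemma antipodeInvSq_comp_antipodeSq :
    (aInv ∘ₗ aInv) ∘ₗ ((S) ∘ₗ (S)) = LinearMap.id := by
  calc (aInv ∘ₗ aInv) ∘ₗ (S) ∘ₗ (S) = aInv ∘ₗ (aInv ∘ₗ (S)) ∘ₗ (S) := by
        simp only [LinearMap.comp_assoc]
    _ = aInv ∘ₗ (LinearMap.id ∘ₗ (S)) := by rw [antipodeInv_comp_antipode hS]
    _ = LinearMap.id := by rw [LinearMap.id_comp, antipodeInv_comp_antipode hS]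

variable (t : H →ₗ[k] H)

lemma twist_eq : twist k H hS t = (aInv ∘ₗ aInv) ∘ₗ t := by
  unfold TwistedExponent.twist
  rw [LinearMap.comp_assoc]

lemma counit_twist (ht : (Coalgebra.counit : H →ₗ[k] k) ∘ₗ t = Coalgebra.counit) :
    (Coalgebra.counit : H →ₗ[k] k) ∘ₗ twist k H hS t = Coalgebra.counit := by
  rw [twist_eq]
  calc (Coalgebra.counit : H →ₗ[k] k) ∘ₗ ((aInv ∘ₗ aInv) ∘ₗ t)
      = (((Coalgebra.counit : H →ₗ[k] k) ∘ₗ aInv) ∘ₗ aInv) ∘ₗ t := by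
        simp only [LinearMap.comp_assoc]
    _ = Coalgebra.counit := by
        rw [counit_antipodeInv hS, counit_antipodeInv hS, ht]

lemma comul_twist (ht : TensorProduct.map t t ∘ₗ Coalgebra.comul = Coalgebra.comul ∘ₗ t) :
    TensorProduct.map (twist k H hS t) (twist k H hS t) ∘ₗ Coalgebra.comul =
      Coalgebra.comul ∘ₗ twist k H hS t := by
  rw [twist_eq]
  calc TensorProduct.map ((aInv ∘ₗ aInv) ∘ₗ t) ((aInv ∘ₗ aInv) ∘ₗ t) ∘ₗ Coalgebra.comul
      = TensorProduct.map (aInv ∘ₗ aInv) (aInv ∘ₗ aInv) ∘ₗ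
          (TensorProduct.map t t ∘ₗ Coalgebra.comul) := by
        rw [TensorProduct.map_comp, LinearMap.comp_assoc]
    _ = (TensorProduct.map (aInv ∘ₗ aInv) (aInv ∘ₗ aInv) ∘ₗ Coalgebra.comul) ∘ₗ t := by
        rw [ht, LinearMap.comp_assoc]
    _ = Coalgebra.comul ∘ₗ ((aInv ∘ₗ aInv) ∘ₗ t) := by
        rw [comul_antipodeInv_sq hS, LinearMap.comp_assoc]

end Inv

section Pow

variable {k H : Type*} [CommRing k] [Ring H] [HopfAlgebra k H] (t : H →ₗ[k] H)

lemma counit_pow (ht : (Coalgebra.counit : H →ₗ[k] k) ∘ₗ t = Coalgebra.counit) (m : ℕ) :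
    (Coalgebra.counit : H →ₗ[k] k) ∘ₗ (t ^ m) = Coalgebra.counit := by
  induction m with
  | zero => simp [pow_zero, Module.End.one_eq_id]
  | succ n ih =>
      rw [pow_succ, Module.End.mul_eq_comp, ← LinearMap.comp_assoc, ih, ht]

lemma comul_pow (ht : TensorProduct.map t t ∘ₗ Coalgebra.comul = Coalgebra.comul ∘ₗ t) (m : ℕ) :
    TensorProduct.map (t ^ m) (t ^ m) ∘ₗ Coalgebra.comul = Coalgebra.comul ∘ₗ (t ^ m) := by
  induction m with
  | zero =>
      simp only [pow_zero, Module.End.one_eq_id]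
      rw [show TensorProduct.map (LinearMap.id : H →ₗ[k] H) LinearMap.id
        = (LinearMap.id : H ⊗[k] H →ₗ[k] H ⊗[k] H) from TensorProduct.map_id]
      rw [LinearMap.id_comp, LinearMap.comp_id]
  | succ n ih =>
      rw [pow_succ, Module.End.mul_eq_comp, TensorProduct.map_comp, LinearMap.comp_assoc, ht,
        ← LinearMap.comp_assoc, ih, LinearMap.comp_assoc]

lemma comp_pow {H' : Type*} [Ring H'] [HopfAlgebra k H'] (t' : H' →ₗ[k] H')
    (ψ : H →ₗ[k] H') (hT : ψ ∘ₗ t = t' ∘ₗ ψ) (m : ℕ) :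
    ψ ∘ₗ (t ^ m) = (t' ^ m) ∘ₗ ψ := by
  induction m with
  | zero => simp [pow_zero, Module.End.one_eq_id]
  | succ n ih =>
      rw [pow_succ, Module.End.mul_eq_comp, pow_succ, Module.End.mul_eq_comp,
        ← LinearMap.comp_assoc, ih, LinearMap.comp_assoc, hT, ← LinearMap.comp_assoc]

end Pow

section Gamma

variable {k H : Type*} [CommRing k] [Ring H] [HopfAlgebra k H]

lemma conv_eq_cv (f g : H →ₗ[k] H) : TwistedExponent.conv k H f g = cv f g := rfl

lemma convOne_eq_cu : TwistedExponent.convOne k H = (cu : H →ₗ[k] H) := rfl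

lemma gamma_succ (T : H →ₗ[k] H) (m : ℕ) :
    gamma k H T (m + 1) = cv (gamma k H T m) (T ^ m) := rfl

lemma gamma_zero (T : H →ₗ[k] H) : gamma k H T 0 = (cu : H →ₗ[k] H) := rfl

lemma gamma_add (T : H →ₗ[k] H)
    (ht1 : (Coalgebra.counit : H →ₗ[k] k) ∘ₗ T = Coalgebra.counit)
    (ht2 : TensorProduct.map T T ∘ₗ Coalgebra.comul = Coalgebra.comul ∘ₗ T) (m n : ℕ) :
    gamma k H T (m + n) = cv (gamma k H T m) (gamma k H T n ∘ₗ (T ^ m)) := by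
  induction n with
  | zero =>
      rw [Nat.add_zero, gamma_zero, cu_comp _ (counit_pow T ht1 m), cv_one']
  | succ n ih =>
      rw [show m + (n + 1) = (m + n) + 1 from rfl, gamma_succ, ih, cv_assoc, gamma_succ]
      congr 1
      rw [cv_comp _ _ _ (comul_pow T ht2 m)]
      congr 1
      rw [← Module.End.mul_eq_comp, ← pow_add, Nat.add_comm]

end Gamma


section Transfer

variable {k H H' : Type*} [CommRing k] [Ring H] [HopfAlgebra k H] [Ring H'] [HopfAlgebra k H']

lemma gamma_comp (T : H →ₗ[k] H) (T' : H' →ₗ[k] H') (ψ : H →ₗ[k] H')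
    (hψm : ∀ x y : H, ψ (x * y) = ψ x * ψ y) (hψ1 : ψ 1 = 1)
    (hψε : (Coalgebra.counit : H' →ₗ[k] k) ∘ₗ ψ = Coalgebra.counit)
    (hψΔ : TensorProduct.map ψ ψ ∘ₗ Coalgebra.comul = Coalgebra.comul ∘ₗ ψ)
    (hT : ψ ∘ₗ T = T' ∘ₗ ψ) (m : ℕ) :
    ψ ∘ₗ gamma k H T m = gamma k H' T' m ∘ₗ ψ := by
  induction m with
  | zero =>
      rw [gamma_zero, gamma_zero, comp_cu ψ hψ1, cu_comp ψ hψε]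
  | succ n ih =>
      rw [gamma_succ, gamma_succ, comp_cv ψ hψm, ih, comp_pow T T' ψ hT n,
        ← cv_comp _ _ ψ hψΔ]

end Transfer

end Stmt9Aux

open Stmt9Aux


/-- Let `H`, `H'` be Hopf algebras over a field `k` with bijective antipodes,
`τ` a Hopf algebra automorphism of `H` of finite order `r`, and `φ : H → H'` a surjective
bialgebra (hence Hopf algebra) homomorphism with `τ(ker φ) = ker φ`, so that there is an induced
Hopf algebra automorphism `τ'` of `H'` with `τ'(φ(h)) = φ(τ(h))`; let `r'` be the order of `τ'`.
Then `exp_{τ'}(H')` divides `exp_τ(H)·(r/r')` whenever the latter is finite (the statement being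
vacuous when `exp_τ(H) = ∞`, per the convention that every positive integer divides `∞`). -/
theorem stmt9 {k H H' : Type*} [Field k] [Ring H] [HopfAlgebra k H] [Ring H']
    [HopfAlgebra k H']
    (hS : Function.Bijective (HopfAlgebra.antipode (R := k) (A := H)))
    (hS' : Function.Bijective (HopfAlgebra.antipode (R := k) (A := H')))
    (τ : H ≃ₐc[k] H) (r : ℕ) (hr : HasOrder H (⇑τ) r)
    (φ : H →ₐc[k] H') (hφ : Function.Surjective φ)
    (τ' : H' ≃ₐc[k] H') (hcomm : ∀ h : H, τ' (φ h) = φ (τ h))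
    (r' : ℕ) (hr' : HasOrder H' (⇑τ') r')
    (e : ℕ)
    (he : IsLeast {n : ℕ | 0 < n ∧
      gamma k H (twist k H hS (τ : H →ₗ[k] H)) (n * r) = convOne k H} e) :
    ∃ e' : ℕ, IsLeast {n : ℕ | 0 < n ∧
      gamma k H' (twist k H' hS' (τ' : H' →ₗ[k] H')) (n * r') = convOne k H'} e' ∧
      e' ∣ e * (r / r') := by
  classical
  set φL : H →ₗ[k] H' := (φ : H →ₗ[k] H') with hφL
  set τL : H →ₗ[k] H := (τ : H →ₗ[k] H) with hτL
  set τ'L : H' →ₗ[k] H' := (τ' : H' →ₗ[k] H') with hτ'L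
  set T : H →ₗ[k] H := twist k H hS τL with hT
  set T' : H' →ₗ[k] H' := twist k H' hS' τ'L with hT'
  -- properties of φ
  have hφm : ∀ x y : H, φL (x * y) = φL x * φL y := fun x y => map_mul φ x y
  have hφ1 : φL 1 = 1 := map_one φ
  have hφε : (Coalgebra.counit : H' →ₗ[k] k) ∘ₗ φL = Coalgebra.counit := by
    ext x; exact CoalgHomClass.counit_comp_apply φ x
  have hφΔ : TensorProduct.map φL φL ∘ₗ Coalgebra.comul = Coalgebra.comul ∘ₗ φL := by
    ext x; exact CoalgHomClass.map_comp_comul_apply φ x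
  -- properties of τ'
  have hτ'ε : (Coalgebra.counit : H' →ₗ[k] k) ∘ₗ τ'L = Coalgebra.counit := by
    ext x; exact CoalgHomClass.counit_comp_apply τ' x
  have hτ'Δ : TensorProduct.map τ'L τ'L ∘ₗ Coalgebra.comul = Coalgebra.comul ∘ₗ τ'L := by
    ext x; exact CoalgHomClass.map_comp_comul_apply τ' x
  have hT'ε : (Coalgebra.counit : H' →ₗ[k] k) ∘ₗ T' = Coalgebra.counit :=
    counit_twist hS' τ'L hτ'ε
  have hT'Δ : TensorProduct.map T' T' ∘ₗ Coalgebra.comul = Coalgebra.comul ∘ₗ T' :=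
    comul_twist hS' τ'L hτ'Δ
  -- φ commutes with the antipodes
  have hSφ : HopfAlgebra.antipode k ∘ₗ φL = φL ∘ₗ HopfAlgebra.antipode k := by
    have h1 : cv (HopfAlgebra.antipode k ∘ₗ φL) φL = cu := by
      have h := cv_comp (HopfAlgebra.antipode (R := k) (A := H')) LinearMap.id φL hφΔ
      rw [cv_antipode_id, cu_comp φL hφε, LinearMap.id_comp] at h
      exact h.symm
    have h2 : cv φL (φL ∘ₗ HopfAlgebra.antipode k) = cu := by
      have h := comp_cv φL hφm LinearMap.id (HopfAlgebra.antipode (R := k) (A := H))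
      rw [cv_id_antipode, comp_cu φL hφ1, LinearMap.comp_id] at h
      exact h.symm
    exact cv_inv_unique h1 h2
  have hφaInv : φL ∘ₗ antipodeInv k H hS = antipodeInv k H' hS' ∘ₗ φL := by
    have e1 : HopfAlgebra.antipode k ∘ₗ (φL ∘ₗ antipodeInv k H hS) = φL := by
      calc HopfAlgebra.antipode k ∘ₗ (φL ∘ₗ antipodeInv k H hS)
          = (HopfAlgebra.antipode k ∘ₗ φL) ∘ₗ antipodeInv k H hS := by
            rw [LinearMap.comp_assoc]
        _ = (φL ∘ₗ HopfAlgebra.antipode k) ∘ₗ antipodeInv k H hS := by rw [hSφ]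
        _ = φL ∘ₗ (HopfAlgebra.antipode k ∘ₗ antipodeInv k H hS) := by
            rw [LinearMap.comp_assoc]
        _ = φL := by rw [antipode_comp_antipodeInv hS, LinearMap.comp_id]
    have e2 : HopfAlgebra.antipode k ∘ₗ (antipodeInv k H' hS' ∘ₗ φL) = φL := by
      rw [← LinearMap.comp_assoc, antipode_comp_antipodeInv hS', LinearMap.id_comp]
    refine LinearMap.ext fun x => hS'.injective ?_
    exact (LinearMap.congr_fun e1 x).trans (LinearMap.congr_fun e2 x).symm
  have hfInv : ∀ y : H, φL (antipodeInv k H hS y) = antipodeInv k H' hS' (φL y) :=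
    fun y => LinearMap.congr_fun hφaInv y
  have hcommpt : ∀ y : H, φL (τL y) = τ'L (φL y) := fun y => (hcomm y).symm
  have hφT : φL ∘ₗ T = T' ∘ₗ φL := by
    ext x
    show φL (antipodeInv k H hS (antipodeInv k H hS (τL x)))
      = antipodeInv k H' hS' (antipodeInv k H' hS' (τ'L (φL x)))
    rw [hfInv, hfInv, hcommpt]
  have hγ : ∀ m : ℕ, φL ∘ₗ gamma k H T m = gamma k H' T' m ∘ₗ φL :=
    gamma_comp T T' φL hφm hφ1 hφε hφΔ hφT
  -- Γ'_{e·r} is trivial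
  have hΓer : gamma k H' T' (e * r) = convOne k H' := by
    have hmap : gamma k H' T' (e * r) ∘ₗ φL = convOne k H' ∘ₗ φL := by
      rw [← hγ (e * r), he.1.2, convOne_eq_cu, convOne_eq_cu, comp_cu φL hφ1,
        cu_comp φL hφε]
    ext x
    obtain ⟨y, rfl⟩ := hφ x
    exact LinearMap.congr_fun hmap y
  -- r' divides r
  have hτiter : ∀ (n : ℕ) (x : H), (⇑τ')^[n] (φ x) = φ ((⇑τ)^[n] x) := by
    intro n
    induction n with
    | zero => intro x; rfl
    | succ m ih =>
        intro x
        rw [Function.iterate_succ_apply', Function.iterate_succ_apply', ih, hcomm]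
  have hτ'r : (⇑τ')^[r] = id := by
    funext x
    obtain ⟨y, rfl⟩ := hφ x
    rw [hτiter r y, hr.2.1]
    rfl
  have hr'r : r' ∣ r := by
    have hmod : (⇑τ')^[r % r'] = id := by
      have hsum : r % r' + r' * (r / r') = r := Nat.mod_add_div r r'
      have h2 : (⇑τ')^[r % r' + r' * (r / r')]
          = (⇑τ')^[r % r'] ∘ (⇑τ')^[r' * (r / r')] := Function.iterate_add _ _ _
      have h3 : (⇑τ')^[r' * (r / r')] = id := by
        rw [Function.iterate_mul, hr'.2.1, Function.iterate_id]
      rw [hsum, hτ'r, h3, Function.comp_id] at h2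
      exact h2.symm
    rcases Nat.eq_zero_or_pos (r % r') with h0 | hpos
    · exact Nat.dvd_of_mod_eq_zero h0
    · exact absurd hmod (hr'.2.2 _ hpos (Nat.mod_lt _ hr'.1))
  -- the candidate element
  set N : ℕ := e * (r / r') with hN
  have hNr' : N * r' = e * r := by
    rw [hN, mul_assoc, Nat.div_mul_cancel hr'r]
  have hNpos : 0 < N :=
    Nat.mul_pos he.1.1 (Nat.div_pos (Nat.le_of_dvd hr.1 hr'r) hr'.1)
  have hNmem : N ∈ {n : ℕ | 0 < n ∧ gamma k H' T' (n * r') = convOne k H'} := by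
    refine ⟨hNpos, ?_⟩
    rw [hNr']
    exact hΓer
  set Sset : Set ℕ := {n : ℕ | 0 < n ∧ gamma k H' T' (n * r') = convOne k H'} with hSset
  have hne : Sset.Nonempty := ⟨N, hNmem⟩
  set e' : ℕ := sInf Sset with he'
  have he'mem : e' ∈ Sset := Nat.sInf_mem hne
  have he'least : IsLeast Sset e' := ⟨he'mem, fun b hb => Nat.sInf_le hb⟩
  refine ⟨e', he'least, ?_⟩
  -- e' divides N
  have hΓq : ∀ q : ℕ, gamma k H' T' (q * (e' * r')) = convOne k H' := by
    intro q
    induction q with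
    | zero => rw [Nat.zero_mul]; rfl
    | succ n ih =>
        have harith : (n + 1) * (e' * r') = n * (e' * r') + e' * r' := by ring
        rw [harith, gamma_add T' hT'ε hT'Δ, ih, he'mem.2, convOne_eq_cu,
          cu_comp _ (counit_pow T' hT'ε _), cv_one]
  -- the inverse of T'
  set S' : H' →ₗ[k] H' := HopfAlgebra.antipode (R := k) (A := H') with hS'def
  set U : H' →ₗ[k] H' := ((τ'.symm : H' →ₗ[k] H')) ∘ₗ (S' ∘ₗ S') with hU
  have hT'U : T' ∘ₗ U = LinearMap.id := by
    ext x
    have h1 : τ' (τ'.symm (S' (S' x))) = S' (S' x) :=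
      CoalgEquiv.apply_symm_apply (τ' : H' ≃ₗc[k] H') _
    have h2 := LinearMap.congr_fun (antipodeInvSq_comp_antipodeSq hS') x
    show antipodeInv k H' hS' (antipodeInv k H' hS' (τ'L (τ'.symm (S' (S' x))))) = x
    have h1' : τ'L (τ'.symm (S' (S' x))) = S' (S' x) := h1
    rw [h1']
    exact h2
  have hUε : (Coalgebra.counit : H' →ₗ[k] k) ∘ₗ U = Coalgebra.counit := by
    ext x
    have h1 : Coalgebra.counit (R := k) (τ'.symm (S' (S' x)))
        = Coalgebra.counit (R := k) (S' (S' x)) :=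
      CoalgHomClass.counit_comp_apply τ'.symm _
    have h2 := LinearMap.congr_fun (counit_antipode (k := k) (H := H')) (S' x)
    have h3 := LinearMap.congr_fun (counit_antipode (k := k) (H := H')) x
    show Coalgebra.counit (τ'.symm (S' (S' x))) = Coalgebra.counit x
    rw [h1]
    exact h2.trans h3
  have hTU : ∀ m : ℕ, (T' ^ m) ∘ₗ (U ^ m) = LinearMap.id := by
    intro m
    induction m with
    | zero => simp [pow_zero, Module.End.one_eq_id]
    | succ n ih =>
        have hstep : (T' ^ (n + 1)) ∘ₗ (U ^ (n + 1))
            = (T' ^ n) ∘ₗ ((T' ∘ₗ U) ∘ₗ (U ^ n)) := by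
          rw [pow_succ, pow_succ']
          simp only [Module.End.mul_eq_comp, LinearMap.comp_assoc]
        rw [hstep, hT'U, LinearMap.id_comp, ih]
  -- remainder analysis
  have hNd : N * r' = (N / e') * (e' * r') + (N % e') * r' := by
    calc N * r' = (N / e' * e' + N % e') * r' := by rw [Nat.div_add_mod']
      _ = (N / e') * (e' * r') + (N % e') * r' := by ring
  have hrem : gamma k H' T' ((N % e') * r') = convOne k H' := by
    have h := hNmem.2
    rw [hNd, gamma_add T' hT'ε hT'Δ, hΓq (N / e'), convOne_eq_cu, cv_one] at h
    -- h : gamma _ ∘ₗ T'^m = cu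
    have h2 := congrArg (fun f => f ∘ₗ (U ^ ((N / e') * (e' * r')))) h
    rw [LinearMap.comp_assoc, hTU _, LinearMap.comp_id,
      cu_comp _ (counit_pow U hUε _)] at h2
    rw [convOne_eq_cu]
    exact h2
  have hs0 : N % e' = 0 := by
    by_contra hne0
    have hpos : 0 < N % e' := Nat.pos_of_ne_zero hne0
    have hmem : (N % e') ∈ Sset := ⟨hpos, hrem⟩
    have hle := Nat.sInf_le hmem
    exact absurd hle (not_le.mpr (Nat.mod_lt _ he'mem.1))
  exact Nat.dvd_of_mod_eq_zero hs0
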